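/- In the algebra U_{\lambda,\mu} with q-commuting elements as above, for every n \in \mathbb{N} there exist coefficients c_{\alpha,\beta} in the base ring (depending on \lambda^{-1}, \mu^{-1}, q) such that u_\mu (u_\lambda)^n = \sum_{\alpha+\beta = n+1} c_{\alpha,\beta} (u_\lambda)^\alpha (u_\mu)^\beta, and these are given by c_{\alpha,0} = (q^{\alpha-1}-1)\lambda^{-1} / (q^{\alpha-1}\lambda^{-1} - \mu^{-1}) and, for \beta \neq 0, c_{\alpha,\beta} = q^{\alpha-1} \left[\prod_{j=\alpha+1}^{\alpha+\beta-1}(q^j - 1)\right] \frac{(\lambda^{-1}-\mu^{-1})(\lambda^{-1}-q\mu^{-1})\mu^{-(\beta-1)}}{\prod_{j=\alpha-1}^{\alpha+\beta-1}(q^j \lambda^{-1}-\mu^{-1})}. -/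

import Mathlib

open Finset

theorem prodIccTop {M : Type*} [CommMonoid M] (a b : ℤ) (h : a ≤ b+1) (f : ℤ → M) :
    (∏ j ∈ Finset.Icc a (b+1), f j) = (∏ j ∈ Finset.Icc a b, f j) * f (b+1) := by
  have : Finset.Icc a (b+1) = insert (b+1) (Finset.Icc a b) := by
    ext x; simp [Finset.mem_Icc]; omega
  rw [this, Finset.prod_insert (by simp [Finset.mem_Icc]), mul_comm]

namespace St14
variable {K : Type*} [Field K]

noncomputable def cc (q l m : K) (α β : ℕ) : K :=
  if β = 0 then (q ^ ((α : ℤ) - 1) - 1) * l / (q ^ ((α : ℤ) - 1) * l - m)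
  else q ^ ((α : ℤ) - 1) *
      (∏ j ∈ Finset.Icc ((α : ℤ) + 1) ((α : ℤ) + (β : ℤ) - 1), (q ^ j - 1)) *
      ((l - m) * (l - q * m) * m ^ ((β : ℤ) - 1)) /
      (∏ j ∈ Finset.Icc ((α : ℤ) - 1) ((α : ℤ) + (β : ℤ) - 1), (q ^ j * l - m))

noncomputable def Aq (q l m : K) : K := (q-1)*l/(q*l-m)
noncomputable def Bq (q l m : K) : K := (q-1)*m/(q*l-m)
noncomputable def Cq (q l m : K) : K := (l-q*m)/(q*l-m)
noncomputable def rr (q l m : K) (N : ℕ) : K := (q^N - 1)*m/(q^N*l - m)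

variable (q l m : K) (hq : q ≠ 0) (hl : l ≠ 0) (hm : m ≠ 0)
  (hd : ∀ j : ℤ, q ^ j * l - m ≠ 0)

lemma cc_zero (α : ℕ) :
    cc q l m α 0 = (q ^ ((α : ℤ) - 1) - 1) * l / (q ^ ((α : ℤ) - 1) * l - m) := by
  simp [cc]

lemma hlm (hd : ∀ j : ℤ, q ^ j * l - m ≠ 0) : l - m ≠ 0 := by have := hd 0; simpa using this

lemma hql (hd : ∀ j : ℤ, q ^ j * l - m ≠ 0) : q*l - m ≠ 0 := by have := hd 1; simpa using this

section
include hq hm hd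

lemma hdn (N : ℕ) : q ^ N * l - m ≠ 0 := by
  have := hd (N : ℤ); rwa [zpow_natCast] at this

lemma cc_one (α : ℕ) :
    cc q l m α 1 = q ^ ((α : ℤ) - 1) * ((l - m) * (l - q * m)) /
      ((q ^ ((α : ℤ) - 1) * l - m) * (q ^ (α : ℤ) * l - m)) := by
  rw [cc]
  simp only [Nat.cast_one, if_neg one_ne_zero]
  rw [show (α:ℤ) + 1 - 1 = ((α:ℤ) - 1) + 1 by ring,
    prodIccTop ((α:ℤ)-1) ((α:ℤ)-1) (by omega),
    Finset.Icc_eq_empty (show ¬((α:ℤ)+1 ≤ (α:ℤ)-1+1) by omega), Finset.prod_empty,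
    Finset.Icc_self, Finset.prod_singleton,
    show ((α:ℤ) - 1 + 1) = (α:ℤ) by ring]
  norm_num

lemma cc_ratio (α β : ℕ) :
    cc q l m α (β+2) = rr q l m (α+β+1) * cc q l m α (β+1) := by
  rw [cc, cc, rr]
  simp only [if_neg (Nat.succ_ne_zero _)]
  have e1 : ((α:ℤ) + ((β:ℕ)+2 : ℕ) - 1 : ℤ) = ((α:ℤ) + ((β:ℕ)+1:ℕ) - 1) + 1 := by
    push_cast; ring
  rw [e1, prodIccTop ((α:ℤ)+1) _ (by push_cast; omega),
    prodIccTop ((α:ℤ)-1) _ (by push_cast; omega)]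
  have e2 : ((α:ℤ) + (((β:ℕ)+1:ℕ)) - 1 + 1 : ℤ) = ((α:ℤ)+(β:ℤ)) + 1 := by push_cast; ring
  have e3 : (((β:ℕ)+2:ℕ) - 1 : ℤ) = ((((β:ℕ)+1:ℕ) : ℤ) - 1) + 1 := by push_cast; ring
  have hz : (q:K) ^ ((α:ℕ)+(β:ℕ)+1 : ℕ) = q ^ ((α:ℤ)+(β:ℤ)) * q := by
    rw [← zpow_natCast, ← zpow_add_one₀ hq]; norm_num
  rw [e2, e3, zpow_add_one₀ hm, zpow_add_one₀ hq, hz]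
  have h1 : q ^ ((α:ℤ)+(β:ℤ)) * q * l - m ≠ 0 := by
    have := hd ((α:ℤ)+(β:ℤ)+1); rwa [zpow_add_one₀ hq] at this
  have h2 : (∏ j ∈ Finset.Icc ((α : ℤ) - 1) ((α : ℤ) + (((β:ℕ)+1:ℕ):ℤ) - 1), (q ^ j * l - m)) ≠ 0 :=
    Finset.prod_ne_zero_iff.mpr fun j _ => hd j
  field_simp

lemma cc01 : cc q l m 0 1 = 1 := by
  rw [cc_one q l m hq hm hd]
  rw [show (((0:ℕ):ℤ) - 1) = (-1:ℤ) by norm_num, show (((0:ℕ):ℤ)) = (0:ℤ) by norm_num,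
    zpow_neg_one, zpow_zero]
  have h3 : q⁻¹ * l - m ≠ 0 := by
    have := hd (-1); rwa [zpow_neg_one] at this
  have h4 := hlm q l m hd
  rw [div_eq_one_iff_eq (mul_ne_zero h3 (by simpa using h4))]
  field_simp

lemma cc10 : cc q l m 1 0 = 0 := by
  rw [cc_zero, show (((1:ℕ):ℤ) - 1) = 0 by norm_num]
  norm_num

lemma cc20 : cc q l m 2 0 = Aq q l m := by
  rw [cc_zero, show (((2:ℕ):ℤ) - 1) = 1 by norm_num, Aq]
  norm_num

lemma cc11 : cc q l m 1 1 = Cq q l m := by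
  rw [cc_one q l m hq hm hd, show (((1:ℕ):ℤ) - 1) = 0 by norm_num, Cq]
  have h4 := hlm q l m hd
  have h5 := hql q l m hd
  rw [show (((1:ℕ):ℤ)) = (1:ℤ) by norm_num, zpow_zero, zpow_one, one_mul, one_mul,
    div_eq_div_iff (mul_ne_zero h4 h5) h5]
  ring

lemma cc02 : cc q l m 0 2 = Bq q l m := by
  have := cc_ratio q l m hq hm hd 0 0
  rw [cc01 q l m hq hm hd, mul_one] at this
  rw [this, rr, Bq, pow_one]

set_option maxHeartbeats 1000000 in
lemma E0 (n : ℕ) : (1 - Bq q l m * cc q l m (n+1) 0) * cc q l m (n+2) 0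
    = Aq q l m + Cq q l m * cc q l m (n+1) 0 := by
  rw [cc_zero q l m (n+1), cc_zero q l m (n+2),
    show ((((n:ℕ)+1:ℕ)):ℤ) - 1 = (n:ℤ) by push_cast; ring,
    show ((((n:ℕ)+2:ℕ)):ℤ) - 1 = (n:ℤ) + 1 by push_cast; ring,
    Aq, Bq, Cq]
  simp only [zpow_add_one₀ hq]
  have h1 : q^(n:ℤ)*l - m ≠ 0 := hd n
  have h2 : q^(n:ℤ)*q*l - m ≠ 0 := by
    have := hd ((n:ℤ)+1); rwa [zpow_add_one₀ hq] at this
  have h4 := hlm q l m hd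
  have h5 := hql q l m hd
  generalize hv : q^(n:ℤ) = v at h1 h2 ⊢
  have h1' : l * v - m ≠ 0 := by rw [mul_comm]; exact h1
  have h2' : q * l * v - m ≠ 0 := by rw [show q * l * v = v * q * l by ring]; exact h2
  field_simp
  ring

set_option maxHeartbeats 1000000 in
lemma E1 (n : ℕ) : (1 - Bq q l m * cc q l m (n+1) 0) * cc q l m (n+1) 1
    = cc q l m n 1 * (Cq q l m + Bq q l m * cc q l m (n+1) 0) := by
  rw [cc_zero q l m (n+1), cc_one q l m hq hm hd n, cc_one q l m hq hm hd (n+1),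
    show ((((n:ℕ)+1:ℕ)):ℤ) - 1 = ((n:ℤ) - 1) + 1 by push_cast; ring,
    show (((n:ℕ)+1:ℕ):ℤ) = ((n:ℤ) - 1) + 1 + 1 by push_cast; ring,
    show (q:K) ^ ((n:ℕ):ℤ) = q ^ (((n:ℤ) - 1) + 1) by congr 1; ring,
    Bq, Cq]
  simp only [zpow_add_one₀ hq]
  have h1 : q^((n:ℤ)-1)*l - m ≠ 0 := hd _
  have h2 : q^((n:ℤ)-1)*q*l - m ≠ 0 := by
    have := hd ((n:ℤ)-1+1); rwa [zpow_add_one₀ hq] at this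
  have h3 : q^((n:ℤ)-1)*q*q*l - m ≠ 0 := by
    have := hd ((n:ℤ)-1+1+1); rwa [zpow_add_one₀ hq, zpow_add_one₀ hq] at this
  have h4 := hlm q l m hd
  have h5 := hql q l m hd
  generalize hv : q^((n:ℤ)-1) = v at h1 h2 h3 ⊢
  have h1' : l * v - m ≠ 0 := by rw [mul_comm]; exact h1
  have h2' : q * l * v - m ≠ 0 := by rw [show q * l * v = v * q * l by ring]; exact h2
  have h3' : q ^ 2 * l * v - m ≠ 0 := by rw [show q ^ 2 * l * v = v * q * q * l by ring]; exact h3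
  field_simp
  ring

set_option maxHeartbeats 1000000 in
lemma Jlem (n : ℕ) : (1 - Bq q l m * cc q l m (n+2) 0) * rr q l m (n+2)
    = rr q l m (n+1) * (1 - Bq q l m * cc q l m (n+1) 0) + Bq q l m * cc q l m (n+1) 1 := by
  rw [cc_zero q l m (n+1), cc_zero q l m (n+2), cc_one q l m hq hm hd (n+1), rr, rr,
    show ((((n:ℕ)+1:ℕ)):ℤ) - 1 = (n:ℤ) by push_cast; ring,
    show ((((n:ℕ)+2:ℕ)):ℤ) - 1 = (n:ℤ) + 1 by push_cast; ring,
    show (((n:ℕ)+1:ℕ):ℤ) = (n:ℤ) + 1 by push_cast; ring,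
    show ((q:K) ^ ((n:ℕ)+1:ℕ) : K) = q ^ ((n:ℤ)+1) by rw [← zpow_natCast]; push_cast; ring_nf,
    show ((q:K) ^ ((n:ℕ)+2:ℕ) : K) = q ^ ((n:ℤ)+1+1) by rw [← zpow_natCast]; push_cast; ring_nf,
    Bq]
  simp only [zpow_add_one₀ hq]
  have h1 : q^(n:ℤ)*l - m ≠ 0 := hd n
  have h2 : q^(n:ℤ)*q*l - m ≠ 0 := by
    have := hd ((n:ℤ)+1); rwa [zpow_add_one₀ hq] at this
  have h3 : q^(n:ℤ)*q*q*l - m ≠ 0 := by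
    have := hd ((n:ℤ)+1+1); rwa [zpow_add_one₀ hq, zpow_add_one₀ hq] at this
  have h4 := hlm q l m hd
  have h5 := hql q l m hd
  generalize hv : q^(n:ℤ) = v at h1 h2 h3 ⊢
  have h1' : l * v - m ≠ 0 := by rw [mul_comm]; exact h1
  have h2' : q * l * v - m ≠ 0 := by rw [show q * l * v = v * q * l by ring]; exact h2
  have h3' : q ^ 2 * l * v - m ≠ 0 := by rw [show q ^ 2 * l * v = v * q * q * l by ring]; exact h3
  field_simp
  ring

end

noncomputable def Sg (q l m : K) (n α : ℕ) : K :=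
  ∑ a ∈ Finset.Icc (α-1) n, cc q l m a (n+1-a) * cc q l m α (a+1-α)

section
include hq hm hd

lemma SgTop (n α : ℕ) (hα : α ≤ n+2) :
    Sg q l m (n+1) α = rr q l m (n+1) * Sg q l m n α
      + cc q l m (n+1) 1 * cc q l m α (n+2-α) := by
  rw [Sg, Sg, Finset.sum_Icc_succ_top (by omega : α-1 ≤ n+1), Finset.mul_sum]
  congr 1
  · apply Finset.sum_congr rfl
    intro a ha
    have ha' : a ≤ n := (Finset.mem_Icc.mp ha).2
    have := cc_ratio q l m hq hm hd a (n-a)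
    rw [show (n-a)+2 = n+1+1-a by omega, show a+(n-a)+1 = n+1 by omega,
      show (n-a)+1 = n+1-a by omega] at this
    rw [this]; ring
  · rw [show n+1+1-(n+1) = 1 by omega, show n+1+1-α = n+2-α by omega]

lemma Ilem (n : ℕ) : ∀ α : ℕ, α ≤ n+2 →
    (1 - Bq q l m * cc q l m (n+1) 0) * cc q l m α (n+2-α)
    = (if α = n+2 then Aq q l m else 0)
      + (if 1 ≤ α then Cq q l m * cc q l m (α-1) (n+2-α) else 0)
      + Bq q l m * Sg q l m n α := by
  induction n with
  | zero =>
    intro α hα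
    interval_cases α
    · rw [cc10 q l m hq hm hd, cc02 q l m hq hm hd]
      simp [Sg, cc01 q l m hq hm hd]
    · rw [cc10 q l m hq hm hd, cc11 q l m hq hm hd]
      have : Sg q l m 0 1 = 0 := by
        simp [Sg, cc10 q l m hq hm hd]
      rw [this]
      simp [cc01 q l m hq hm hd]
    · rw [cc10 q l m hq hm hd, cc20 q l m hq hm hd]
      have : Sg q l m 0 2 = 0 := by
        rw [Sg]
        simp
      rw [this]
      simp
  | succ k IH =>
    intro α hα
    rcases Nat.lt_or_ge α (k+2) with hcase | hcase
    · -- generic: α ≤ k+1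
      have hle : α ≤ k+1 := by omega
      rw [if_neg (by omega)]
      have rat1 := cc_ratio q l m hq hm hd α (k+1-α)
      rw [show (k+1-α)+2 = k+1+2-α by omega, show α+(k+1-α)+1 = k+2 by omega,
        show (k+1-α)+1 = k+2-α by omega] at rat1
      have sg := SgTop q l m hq hm hd k α (by omega)
      have ih := IH α (by omega)
      rw [if_neg (by omega)] at ih
      have jj := Jlem q l m hq hm hd k
      by_cases h1 : 1 ≤ α
      · have rat2 := cc_ratio q l m hq hm hd (α-1) (k+1-α)
        rw [show (k+1-α)+2 = k+1+2-α by omega, show (α-1)+(k+1-α)+1 = k+1 by omega,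
          show (k+1-α)+1 = k+2-α by omega] at rat2
        rw [if_pos h1] at ih ⊢
        rw [rat1, rat2, sg]
        linear_combination (rr q l m (k+1)) * ih + (cc q l m α (k+2-α)) * jj
      · rw [if_neg h1] at ih ⊢
        rw [rat1, sg]
        linear_combination (rr q l m (k+1)) * ih + (cc q l m α (k+2-α)) * jj
    · rcases Nat.lt_or_ge α (k+3) with hcase2 | hcase2
      · -- α = k+2
        have hα2 : α = k+2 := by omega
        subst hα2
        rw [if_neg (by omega), if_pos (by omega),
          show k+1+2-(k+2) = 1 by omega, show k+2-1 = k+1 by omega]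
        have sg : Sg q l m (k+1) (k+2) = cc q l m (k+1) 1 * cc q l m (k+2) 0 := by
          rw [Sg, show k+2-1 = k+1 by omega, Finset.Icc_self, Finset.sum_singleton,
            show k+1+1-(k+1) = 1 by omega, show (k+1)+1-(k+2) = 0 by omega]
        rw [sg]
        linear_combination E1 q l m hq hm hd (k+1)
      · -- α = k+3
        have hα2 : α = k+3 := by omega
        subst hα2
        rw [if_pos (by omega), if_pos (by omega),
          show k+1+2-(k+3) = 0 by omega, show k+3-1 = k+2 by omega]
        have sg : Sg q l m (k+1) (k+3) = 0 := by
          rw [Sg, show k+3-1 = k+2 by omega]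
          simp
        rw [sg]
        linear_combination E0 q l m hq hm hd (k+1)

lemma Kne (n : ℕ) : 1 - Bq q l m * cc q l m (n+1) 0 ≠ 0 := by
  rw [cc_zero q l m (n+1), show ((((n:ℕ)+1:ℕ)):ℤ) - 1 = (n:ℤ) by push_cast; ring, Bq]
  have h1 : q^(n:ℤ)*l - m ≠ 0 := hd n
  have h2 : q^(n:ℤ)*q*l - m ≠ 0 := by
    have := hd ((n:ℤ)+1); rwa [zpow_add_one₀ hq] at this
  have h4 := hlm q l m hd
  have h5 := hql q l m hd
  generalize hv : q^(n:ℤ) = v at h1 h2 ⊢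
  have h1' : l * v - m ≠ 0 := by rw [mul_comm]; exact h1
  have h2' : q * l * v - m ≠ 0 := by rw [show q * l * v = v * q * l by ring]; exact h2
  have e : 1 - (q-1)*m/(q*l-m) * ((v-1)*l/(v*l-m)) = ((l-m)*(v*q*l-m))/((q*l-m)*(v*l-m)) := by
    field_simp; ring
  rw [e]
  exact div_ne_zero (mul_ne_zero h4 h2) (mul_ne_zero h5 h1)

end
end St14

open St14 in
/-- reordering coefficients in `U_{λ,μ}`.  Writing `l = λ⁻¹`,
`m = μ⁻¹` in a field `K` where all denominators `q^j l - m` are nonzero, for the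
elements `u_λ, u_μ` of a `K`-algebra satisfying the quadratic exchange relation,
there are scalars `c_{α,β}` with
`u_μ u_λ^n = ∑_{α+β=n+1} c_{α,β} u_λ^α u_μ^β`, given by the stated closed
formulas. -/
theorem statement14 {K : Type*} [Field K] {A : Type*} [Ring A] [Algebra K A]
    (q l m : K) (hq : q ≠ 0) (hl : l ≠ 0) (hm : m ≠ 0)
    (hden : ∀ j : ℤ, q ^ j * l - m ≠ 0)
    (ul um : A)
    (hrel : (l • ul - m • um) * (ul - um) = q • ((ul - um) * (l • ul - m • um))) :
    ∃ c : ℕ → ℕ → K,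
      (∀ n : ℕ, um * ul ^ n =
        ∑ p ∈ Finset.HasAntidiagonal.antidiagonal (n + 1), c p.1 p.2 • (ul ^ p.1 * um ^ p.2)) ∧
      (∀ α : ℕ, c α 0 =
        (q ^ ((α : ℤ) - 1) - 1) * l / (q ^ ((α : ℤ) - 1) * l - m)) ∧
      (∀ α β : ℕ, β ≠ 0 → c α β =
        q ^ ((α : ℤ) - 1) *
          (∏ j ∈ Finset.Icc ((α : ℤ) + 1) ((α : ℤ) + (β : ℤ) - 1), (q ^ j - 1)) *
          ((l - m) * (l - q * m) * m ^ ((β : ℤ) - 1)) /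
          (∏ j ∈ Finset.Icc ((α : ℤ) - 1) ((α : ℤ) + (β : ℤ) - 1), (q ^ j * l - m))) := by
  refine ⟨cc q l m, ?_, fun α => by simp [cc], fun α β hβ => by simp [cc, hβ]⟩
  -- the exchange relation
  have hqlm : q * l - m ≠ 0 := hql q l m hden
  have expand : (l • ul - m • um) * (ul - um) - q • ((ul - um) * (l • ul - m • um))
      = ((q*l-m) • (um*ul)
        - (((q-1)*l) • (ul*ul) + ((l-q*m)) • (ul*um) + ((q-1)*m) • (um*um))) := by
    simp only [sub_mul, mul_sub, smul_sub, smul_add, smul_mul_assoc, mul_smul_comm, smul_smul]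
    module
  have key : (q*l-m) • (um*ul)
      = ((q-1)*l) • (ul*ul) + ((l-q*m)) • (ul*um) + ((q-1)*m) • (um*um) := by
    have e := expand
    rw [hrel, sub_self] at e
    exact sub_eq_zero.mp e.symm
  have exch : um * ul = Aq q l m • (ul*ul) + Cq q l m • (ul*um) + Bq q l m • (um*um) := by
    have h0 : um * ul = (q*l-m)⁻¹ • ((q*l-m) • (um*ul)) := (inv_smul_smul₀ hqlm _).symm
    rw [h0, key, smul_add, smul_add, smul_smul, smul_smul, smul_smul, Aq, Bq, Cq]
    rw [div_eq_mul_inv, div_eq_mul_inv, div_eq_mul_inv]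
    ring_nf
  -- main induction
  have main : ∀ n : ℕ, um * ul ^ n
      = ∑ a ∈ Finset.range (n+2), cc q l m a (n+1-a) • (ul^a * um^(n+1-a)) := by
    intro n
    induction n using Nat.strong_induction_on with
    | _ n IH =>
      cases n with
      | zero =>
        rw [Finset.sum_range_succ, Finset.sum_range_succ]
        simp [cc01 q l m hq hm hden, cc10 q l m hq hm hden]
      | succ n =>
        rw [show n+1+2 = n+3 by omega, show n+1+1 = n+2 by omega]
        have hS : um * ul ^ n
            = ∑ a ∈ Finset.range (n+2), cc q l m a (n+1-a) • (ul^a * um^(n+1-a)) :=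
          IH n (by omega)
        -- expansion of the B-term summands
        have hterm : ∀ a ∈ Finset.range (n+1),
            cc q l m a (n+1-a) • ((um * ul^a) * um^(n+1-a))
            = cc q l m a (n+1-a) • (∑ g ∈ Finset.range (a+2),
                (cc q l m g (a+1-g)) • (ul^g * um^(n+2-g))) := by
          intro a ha
          have ha' : a < n+1 := Finset.mem_range.mp ha
          rw [IH a (by omega), Finset.sum_mul]
          congr 1
          apply Finset.sum_congr rfl
          intro g hg
          have hg' : g < a+2 := Finset.mem_range.mp hg
          rw [smul_mul_assoc, mul_assoc, ← pow_add,
            show (a+1-g)+(n+1-a) = n+2-g by omega]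
        have e1 : um * ul^(n+1)
            = Aq q l m • (ul^(n+2))
              + Cq q l m • (∑ a ∈ Finset.range (n+2),
                  cc q l m a (n+1-a) • (ul^(a+1) * um^(n+1-a)))
              + Bq q l m • ((∑ a ∈ Finset.range (n+1),
                  cc q l m a (n+1-a) • ((um * ul^a) * um^(n+1-a)))
                + cc q l m (n+1) 0 • (um * ul^(n+1))) := by
          have c1 : um * ul^(n+1) = (um * ul) * ul^n := by
            rw [pow_succ', ← mul_assoc]
          conv_lhs => rw [c1, exch, add_mul, add_mul, smul_mul_assoc, smul_mul_assoc,
            smul_mul_assoc]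
          congr 1
          · congr 1
            · congr 1
              rw [mul_assoc, ← pow_succ', ← pow_succ', show n+1+1 = n+2 by omega]
            · congr 1
              rw [mul_assoc, hS, Finset.mul_sum]
              apply Finset.sum_congr rfl
              intro a ha
              rw [mul_smul_comm, ← mul_assoc, ← pow_succ']
          · congr 1
            rw [mul_assoc, hS, Finset.mul_sum]
            have h2 : ∀ a ∈ Finset.range (n+2),
                cc q l m a (n+1-a) • ((um * ul^a) * um^(n+1-a))
                = um * (cc q l m a (n+1-a) • (ul^a * um^(n+1-a))) := by
              intro a ha
              rw [mul_smul_comm, ← mul_assoc]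
            rw [← Finset.sum_congr rfl h2, Finset.sum_range_succ]
            congr 1
            rw [show n+1-(n+1) = 0 by omega, pow_zero, mul_one]
        rw [Finset.sum_congr rfl hterm] at e1
        -- rearrange to isolate X
        set X := um * ul^(n+1) with hX
        set T1 := ∑ a ∈ Finset.range (n+2), cc q l m a (n+1-a) • (ul^(a+1) * um^(n+1-a)) with hT1
        set T2 := ∑ a ∈ Finset.range (n+1), cc q l m a (n+1-a) •
            (∑ g ∈ Finset.range (a+2), (cc q l m g (a+1-g)) • (ul^g * um^(n+2-g))) with hT2
        have e2 : (1 - Bq q l m * cc q l m (n+1) 0) • X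
            = Aq q l m • (ul^(n+2)) + Cq q l m • T1 + Bq q l m • T2 := by
          rw [sub_smul, one_smul]
          nth_rewrite 1 [e1]
          module
        -- identify with the target sum
        have e3 : (1 - Bq q l m * cc q l m (n+1) 0)
              • (∑ a ∈ Finset.range (n+3), cc q l m a (n+2-a) • (ul^a * um^(n+2-a)))
            = Aq q l m • (ul^(n+2)) + Cq q l m • T1 + Bq q l m • T2 := by
          rw [Finset.smul_sum]
          have step1 : ∀ a ∈ Finset.range (n+3),
              (1 - Bq q l m * cc q l m (n+1) 0) • (cc q l m a (n+2-a) • (ul^a * um^(n+2-a)))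
              = ((if a = n+2 then Aq q l m else 0) • (ul^a * um^(n+2-a)))
                + ((if 1 ≤ a then Cq q l m * cc q l m (a-1) (n+2-a) else 0) • (ul^a * um^(n+2-a)))
                + ((Bq q l m * Sg q l m n a) • (ul^a * um^(n+2-a))) := by
            intro a ha
            have ha' : a ≤ n+2 := by
              have := Finset.mem_range.mp ha; omega
            rw [smul_smul, Ilem q l m hq hm hden n a ha', add_smul, add_smul]
          rw [Finset.sum_congr rfl step1, Finset.sum_add_distrib, Finset.sum_add_distrib]
          congr 1
          · congr 1
            · -- A-part
              have hA : ∀ a ∈ Finset.range (n+3),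
                  ((if a = n+2 then Aq q l m else 0) • (ul^a * um^(n+2-a)))
                  = if a = n+2 then Aq q l m • (ul^(n+2) * um^(n+2-(n+2))) else 0 := by
                intro a ha
                by_cases h : a = n+2
                · subst h; simp
                · simp [h]
              rw [Finset.sum_congr rfl hA, Finset.sum_ite_eq' (Finset.range (n+3)) (n+2)]
              rw [if_pos (Finset.mem_range.mpr (by omega))]
              rw [show n+2-(n+2) = 0 by omega, pow_zero, mul_one]
            · -- C-part
              rw [show n+3 = n+2+1 by omega, Finset.sum_range_succ' _ (n+2)]
              have z0 : ((if 1 ≤ (0:ℕ) then Cq q l m * cc q l m (0-1) (n+2-0) else 0)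
                  • (ul^(0:ℕ) * um^(n+2-0))) = (0:A) := by
                norm_num
              rw [z0, add_zero, hT1, Finset.smul_sum]
              apply Finset.sum_congr rfl
              intro a ha
              have ha' : a < n+2 := Finset.mem_range.mp ha
              rw [if_pos (by omega), show a+1-1 = a by omega, show n+2-(a+1) = n+1-a by omega,
                smul_smul]
          · -- B-part
            have hcomm : ∀ (a g : ℕ), (a ∈ Finset.range (n+1) ∧ g ∈ Finset.range (a+2))
                ↔ (a ∈ Finset.Icc (g-1) n ∧ g ∈ Finset.range (n+3)) := by
              intro a g
              simp only [Finset.mem_range, Finset.mem_Icc]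
              omega
            have hT2eq : T2 = ∑ g ∈ Finset.range (n+3),
                Sg q l m n g • (ul^g * um^(n+2-g)) := by
              rw [hT2]
              have lhs_eq : ∀ a ∈ Finset.range (n+1),
                  cc q l m a (n+1-a) • (∑ g ∈ Finset.range (a+2),
                    (cc q l m g (a+1-g)) • (ul^g * um^(n+2-g)))
                  = ∑ g ∈ Finset.range (a+2),
                    (cc q l m a (n+1-a) * cc q l m g (a+1-g)) • (ul^g * um^(n+2-g)) := by
                intro a ha
                rw [Finset.smul_sum]
                exact Finset.sum_congr rfl fun g hg => smul_smul _ _ _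
              rw [Finset.sum_congr rfl lhs_eq, Finset.sum_comm' hcomm]
              refine Finset.sum_congr rfl fun g hg => ?_
              rw [Sg, Finset.sum_smul]
            rw [hT2eq, Finset.smul_sum]
            exact Finset.sum_congr rfl fun a ha => mul_smul _ _ _
        have hK := Kne q l m hq hm hden n
        have hfin : X = (1 - Bq q l m * cc q l m (n+1) 0)⁻¹
            • ((1 - Bq q l m * cc q l m (n+1) 0) • X) := (inv_smul_smul₀ hK _).symm
        rw [hfin, e2, ← e3, inv_smul_smul₀ hK]
  intro n
  rw [main n, Finset.Nat.sum_antidiagonal_eq_sum_range_succ_mk]
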